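/- If a connected graph Γ admits a strong tree decomposition into sets of diameter ≤ k, then Γ admits a uniform spanning tree: there is a tree T with vertex set VΓ and an identity bijection such that (1/3)·dist_T(u,v) ≤ dist_Γ(u,v) ≤ (2k+1)·dist_T(u,v) for all vertices u, v. -/

import Mathlib

/-- The 1-graph associated to a family of subsets. -/
def oneGraph {V : Type*} (G : SimpleGraph V) (P : Set (Set V)) : SimpleGraph P :=
  SimpleGraph.fromRel (fun S T => ∃ u ∈ (S : Set V), ∃ v ∈ (T : Set V), G.dist u v ≤ 1)

open SimpleGraph in
/-- Transfer of distances along walks: if every `H`-edge has `K`-distance at most `C`,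
then `K`-distance is at most `C` times the length of any `H`-walk. -/
private lemma walk_dist_transfer {V : Type*} {H K : SimpleGraph V} {C : ℕ}
    (hK : K.Connected) (hE : ∀ a b : V, H.Adj a b → K.dist a b ≤ C) :
    ∀ {u v : V} (p : H.Walk u v), K.dist u v ≤ C * p.length := by
  intro u v p
  induction p with
  | nil => simp
  | @cons a b c h q ih =>
      calc K.dist a c ≤ K.dist a b + K.dist b c := hK.dist_triangle
        _ ≤ C + C * q.length := Nat.add_le_add (hE a b h) ih
        _ = C * (Walk.cons h q).length := by rw [Walk.length_cons]; ring

open SimpleGraph in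
/-- A path in a path-graph obtained by adding a pendant edge is a path. -/
private lemma isPath_concat {V : Type*} {G : SimpleGraph V} {u v w : V} {p : G.Walk u v}
    (hp : p.IsPath) (h : G.Adj v w) (hw : w ∉ p.support) : (p.concat h).IsPath := by
  rw [Walk.isPath_def, Walk.support_concat, List.nodup_append]
  refine ⟨(Walk.isPath_def _).mp hp, List.nodup_singleton w, ?_⟩
  intro a ha b hb heq
  rw [List.mem_singleton] at hb
  exact hw (hb ▸ heq ▸ ha)

open SimpleGraph in
/-- A graph given by a parent function with a strictly decreasing rank is a tree. -/
private lemma parentTree {V : Type*} (r : V) (f : V → V) (g : V → ℕ)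
    (hr : f r = r) (hdec : ∀ v, v ≠ r → g (f v) < g v) :
    (SimpleGraph.fromRel (fun a b => b = f a)).IsTree := by
  classical
  set T := SimpleGraph.fromRel (fun a b => b = f a) with hT
  have hadj : ∀ v, v ≠ r → T.Adj v (f v) := by
    intro v hv
    have hlt := hdec v hv
    have hne : v ≠ f v := by intro h; rw [← h] at hlt; omega
    rw [hT, SimpleGraph.fromRel_adj]
    exact ⟨hne, Or.inl rfl⟩
  have hreach : ∀ v, T.Reachable v r := by
    have key : ∀ n v, g v ≤ n → T.Reachable v r := by
      intro n
      induction n with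
      | zero =>
          intro v hv
          by_cases hvr : v = r
          · subst hvr; exact Reachable.refl _
          · exact absurd (hdec v hvr) (by omega)
      | succ n ih =>
          intro v hv
          by_cases hvr : v = r
          · subst hvr; exact Reachable.refl _
          · exact (hadj v hvr).reachable.trans
              (ih (f v) (by have := hdec v hvr; omega))
    exact fun v => key (g v) v le_rfl
  have hconn : T.Connected :=
    { preconnected := fun a b => (hreach a).trans (hreach b).symm
      nonempty := ⟨r⟩ }
  refine ⟨hconn, ?_⟩
  intro x c hc
  obtain ⟨u, hu, hmax⟩ := Finset.exists_max_image c.support.toFinset g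
    ⟨x, List.mem_toFinset.mpr c.start_mem_support⟩
  rw [List.mem_toFinset] at hu
  have hmax' : ∀ y ∈ c.support, g y ≤ g u := fun y hy => hmax y (List.mem_toFinset.mpr hy)
  have hc' := hc.rotate hu
  have hsup : ∀ y ∈ (c.rotate u hu).support, g y ≤ g u := by
    intro y hy
    rw [Walk.support_eq_cons, List.mem_cons] at hy
    rcases hy with rfl | hy
    · exact le_rfl
    · refine hmax' y ?_
      have h1 := (Walk.support_rotate c u hu).mem_iff.mp hy
      exact List.mem_of_mem_tail h1
  have main : ∀ (c' : T.Walk u u), c'.IsCycle → (∀ y ∈ c'.support, g y ≤ g u) → False := by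
    intro c' hc' hsup
    cases c' with
    | nil => exact Walk.IsCycle.not_of_nil hc'
    | @cons _ w _ h q =>
        rw [Walk.cons_isCycle_iff] at hc'
        obtain ⟨hq, hedge⟩ := hc'
        have key : ∀ y, T.Adj u y → y ∈ q.support → y = f u := by
          intro y hy hys
          rw [hT, SimpleGraph.fromRel_adj] at hy
          obtain ⟨hne, hy | hy⟩ := hy
          · exact hy
          · exfalso
            have hyr : y ≠ r := by rintro rfl; rw [hr] at hy; exact hne hy
            have h1 := hdec y hyr
            rw [← hy] at h1
            have h2 : g y ≤ g u := hsup y (by rw [Walk.support_cons]; exact List.mem_cons_of_mem _ hys)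
            omega
        have hw : w = f u := key w h q.start_mem_support
        obtain ⟨t, h₂, q₂, hdecomp⟩ := Walk.exists_eq_cons_of_ne h.ne q.reverse
        have htq : t ∈ q.support := by
          have h3 : t ∈ q.reverse.support := by
            rw [hdecomp, Walk.support_cons]
            exact List.mem_cons_of_mem _ q₂.start_mem_support
          rwa [Walk.support_reverse, List.mem_reverse] at h3
        have ht : t = f u := key t h₂ htq
        have hmem : s(u, t) ∈ q.edges := by
          have h4 : s(u, t) ∈ q.reverse.edges := by
            rw [hdecomp, Walk.edges_cons]
            exact List.mem_cons_self
          rwa [Walk.edges_reverse, List.mem_reverse] at h4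
        rw [ht, ← hw] at hmem
        exact hedge hmem
  exact main _ hc' hsup

open SimpleGraph in
/-- Every rooted tree has a parent function, with heights, such that every edge is a
parent-edge. -/
private lemma tree_parent {W : Type*} {Q : SimpleGraph W} (hQ : Q.IsTree) (r : W) :
    ∃ (par : W → W) (ht : W → ℕ), par r = r ∧
      (∀ S, S ≠ r → Q.Adj (par S) S ∧ ht (par S) + 1 = ht S) ∧
      (∀ S S' : W, Q.Adj S S' → par S = S' ∨ par S' = S) := by
  classical
  have hex : ∀ S, ∃ q : Q.Walk r S, q.IsPath ∧ ∀ q' : Q.Walk r S, q'.IsPath → q' = q := by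
    intro S
    obtain ⟨q, hq, hu⟩ := hQ.existsUnique_path r S
    exact ⟨q, hq, hu⟩
  choose p hp hu using hex
  have hnilr : p r = Walk.nil := (hu r Walk.nil Walk.IsPath.nil).symm
  have hpar : ∀ S, ∃ t, (S = r → t = r) ∧
      (S ≠ r → ∃ h : Q.Adj t S, p S = (p t).concat h) := by
    intro S
    by_cases hS : S = r
    · exact ⟨r, fun _ => rfl, fun h => absurd hS h⟩
    · obtain ⟨t, h, q, hdecomp⟩ := Walk.exists_eq_cons_of_ne hS (p S).reverse
      have hqp : q.reverse.IsPath := by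
        have h1 := (hp S).reverse
        rw [hdecomp] at h1
        exact h1.of_cons.reverse
      have hq : q.reverse = p t := hu t q.reverse hqp
      refine ⟨t, fun h' => absurd h' hS, fun _ => ⟨h.symm, ?_⟩⟩
      have h2 : (p S).reverse.reverse = (Walk.cons h q).reverse := by rw [hdecomp]
      rw [Walk.reverse_reverse, Walk.reverse_cons, hq] at h2
      exact h2
  choose par hparr hparp using hpar
  have key : ∀ (A B : W) (hAB : Q.Adj A B), p B = (p A).concat hAB → par B = A := by
    intro A B hAB hconcat
    have hBr : B ≠ r := by
      rintro rfl
      rw [hnilr] at hconcat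
      exact Walk.concat_ne_nil _ _ hconcat.symm
    obtain ⟨h, hconcat'⟩ := hparp B hBr
    rw [hconcat] at hconcat'
    obtain ⟨hv, -⟩ := Walk.concat_inj hconcat'.symm
    exact hv
  refine ⟨par, fun S => (p S).length, hparr r rfl, ?_, ?_⟩
  · intro S hS
    obtain ⟨h, hconcat⟩ := hparp S hS
    exact ⟨h, by show (p (par S)).length + 1 = (p S).length; rw [hconcat, Walk.length_concat]⟩
  · intro S S' hSS
    by_cases hm : S' ∈ (p S).support
    · have hq : (p S).takeUntil S' hm = p S' := hu S' _ ((hp S).takeUntil hm)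
      have hSnot : S ∉ ((p S).takeUntil S' hm).support := by
        have hnod : ((p S).support).Nodup := (Walk.isPath_def _).mp (hp S)
        rw [← Walk.take_spec (p S) hm, Walk.support_append] at hnod
        have hdisj := List.disjoint_of_nodup_append hnod
        have hdS : S ∈ ((p S).dropUntil S' hm).support := Walk.end_mem_support _
        rw [Walk.support_eq_cons, List.mem_cons] at hdS
        rcases hdS with h' | h'
        · exact absurd h' hSS.ne
        · exact fun hSt => hdisj hSt h'
      have hpath : (((p S).takeUntil S' hm).concat hSS.symm).IsPath :=
        isPath_concat ((hp S).takeUntil hm) hSS.symm hSnot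
      have heq : ((p S).takeUntil S' hm).concat hSS.symm = p S := hu S _ hpath
      exact Or.inl (key S' S hSS.symm (by rw [← heq, hq]))
    · have hpath : ((p S).concat hSS).IsPath := isPath_concat (hp S) hSS hm
      have heq : (p S).concat hSS = p S' := hu S' _ hpath
      exact Or.inr (key S S' hSS heq.symm)

/-- If a connected graph admits a strong tree decomposition into parts of diameter `≤ k`,
then it admits a uniform spanning tree: a tree on the same vertex set with
`(1/3)·dist_T(u,v) ≤ dist_Γ(u,v) ≤ (2k+1)·dist_T(u,v)` for all vertices `u, v`. -/
theorem strong_tree_decomp_uniform_spanning_tree {V : Type*} (G : SimpleGraph V)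
    (hG : G.Connected) (k : ℕ)
    (P : Set (Set V)) (hpart : Setoid.IsPartition P) (htree : (oneGraph G P).IsTree)
    (hdiam : ∀ S ∈ P, ∀ u ∈ S, ∀ v ∈ S, G.dist u v ≤ k) :
    ∃ T : SimpleGraph V, T.IsTree ∧
      ∀ u v : V, T.dist u v ≤ 3 * G.dist u v ∧ G.dist u v ≤ (2 * k + 1) * T.dist u v := by
  classical
  obtain ⟨v₀⟩ := hG.nonempty
  -- the partition function
  have hex : ∀ a : V, ∃ S : ↥P, a ∈ (S : Set V) ∧
      ∀ B : Set V, B ∈ P → a ∈ B → B = (S : Set V) := by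
    intro a
    obtain ⟨B, ⟨hBP, haB⟩, huniq⟩ := hpart.2 a
    exact ⟨⟨B, hBP⟩, haB, fun B' hB' haB' => huniq B' ⟨hB', haB'⟩⟩
  choose part hmem huniq using hex
  have part_eq : ∀ (a : V) (S : ↥P), a ∈ (S : Set V) → part a = S := by
    intro a S ha
    exact (Subtype.ext (huniq a S.1 S.2 ha)).symm
  obtain ⟨par, ht, hparr, hpar, hkey⟩ := tree_parent htree (part v₀)
  set r := part v₀ with hr
  -- choose the crossing vertices
  have hyex : ∀ S : ↥P, ∃ y, S ≠ r →
      y ∈ ((par S : ↥P) : Set V) ∧ ∃ x ∈ (S : Set V), G.dist x y ≤ 1 := by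
    intro S
    by_cases hS : S = r
    · exact ⟨v₀, fun h => absurd hS h⟩
    · have hadj := (hpar S hS).1
      rw [oneGraph, SimpleGraph.fromRel_adj] at hadj
      obtain ⟨hne, ⟨x, hx, y, hy, hdd⟩ | ⟨x, hx, y, hy, hdd⟩⟩ := hadj
      · exact ⟨x, fun _ => ⟨hx, y, hy, by rwa [SimpleGraph.dist_comm]⟩⟩
      · exact ⟨y, fun _ => ⟨hy, x, hx, hdd⟩⟩
  choose yOf hyOf using hyex
  set f : V → V := fun a => if part a = r then v₀ else yOf (part a) with hf
  set g : V → ℕ := fun a => if a = v₀ then 0 else 2 * ht (part a) + 1 with hg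
  have hfr : ∀ a, part a = r → f a = v₀ := by
    intro a h; simp [hf, h]
  have hfnr : ∀ a, part a ≠ r → f a = yOf (part a) := by
    intro a h; simp [hf, h]
  have hgv0 : g v₀ = 0 := by simp [hg]
  have hgne : ∀ a, a ≠ v₀ → g a = 2 * ht (part a) + 1 := by
    intro a h; simp [hg, h]
  have hfv0 : f v₀ = v₀ := hfr v₀ hr.symm
  have hdec : ∀ a, a ≠ v₀ → g (f a) < g a := by
    intro a ha
    have hga := hgne a ha
    by_cases hS : part a = r
    · rw [hfr a hS, hgv0, hga]; omega
    · rw [hfnr a hS]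
      obtain ⟨hymem, -⟩ := hyOf (part a) hS
      have hpy : part (yOf (part a)) = par (part a) := part_eq _ _ hymem
      have hht := (hpar (part a) hS).2
      by_cases hy0 : yOf (part a) = v₀
      · rw [hy0, hgv0, hga]; omega
      · rw [hgne _ hy0, hpy, hga]; omega
  set T := SimpleGraph.fromRel (fun a b => b = f a) with hT
  have hTtree : T.IsTree := parentTree v₀ f g hfv0 hdec
  have hTconn : T.Connected := hTtree.isConnected
  -- upper edge bound
  have edgeA : ∀ a b : V, T.Adj a b → G.dist a b ≤ 2 * k + 1 := by
    have one : ∀ a b : V, b = f a → a ≠ b → G.dist a b ≤ 2 * k + 1 := by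
      intro a b hb hne
      by_cases hS : part a = r
      · subst hb; rw [hfr a hS]
        have h1 : v₀ ∈ (part a : Set V) := by rw [hS, hr]; exact hmem v₀
        have h2 := hdiam (part a) (part a).2 a (hmem a) v₀ h1
        omega
      · subst hb; rw [hfnr a hS]
        obtain ⟨hymem, x, hx, hxy⟩ := hyOf (part a) hS
        have h1 : G.dist a (yOf (part a)) ≤ G.dist a x + G.dist x (yOf (part a)) :=
          hG.dist_triangle
        have h2 : G.dist a x ≤ k := hdiam (part a) (part a).2 a (hmem a) x hx
        omega
    intro a b hab
    rw [hT, SimpleGraph.fromRel_adj] at hab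
    obtain ⟨hne, hc | hc⟩ := hab
    · exact one a b hc hne
    · rw [SimpleGraph.dist_comm]; exact one b a hc hne.symm
  -- small step bounds
  have hstep : ∀ a, T.dist a (f a) ≤ 1 := by
    intro a
    by_cases hfa : f a = a
    · rw [hfa, SimpleGraph.dist_self]; exact Nat.zero_le 1
    · have h1 : T.Adj a (f a) := by
        rw [hT, SimpleGraph.fromRel_adj]
        exact ⟨fun h => hfa h.symm, Or.inl rfl⟩
      have h2 := SimpleGraph.dist_le (SimpleGraph.Walk.cons h1 SimpleGraph.Walk.nil)
      simpa using h2
  have hfpart : ∀ a b : V, part a = part b → f a = f b := by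
    intro a b hab; simp [hf, hab]
  have hsame : ∀ a b : V, part a = part b → T.dist a b ≤ 2 := by
    intro a b hab
    have h1 := hstep a
    have h2 := hstep b
    have h3 : T.dist a b ≤ T.dist a (f a) + T.dist (f a) b := hTconn.dist_triangle
    have h4 : T.dist (f a) b = T.dist b (f b) := by
      rw [hfpart a b hab, SimpleGraph.dist_comm]
    omega
  have edgeB : ∀ a b : V, G.Adj a b → T.dist a b ≤ 3 := by
    have cross : ∀ a b : V, G.Adj a b → part a ≠ part b → par (part a) = part b →
        T.dist a b ≤ 3 := by
      intro a b hab hne hpb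
      have har : part a ≠ r := by
        intro h; rw [h, hparr] at hpb; exact hne (h.trans hpb)
      obtain ⟨hymem, -⟩ := hyOf (part a) har
      have hfa : part (f a) = part b := by
        rw [hfnr a har, part_eq _ _ hymem, hpb]
      have h1 : T.dist a b ≤ T.dist a (f a) + T.dist (f a) b := hTconn.dist_triangle
      have h2 := hstep a
      have h3 := hsame (f a) b hfa
      omega
    intro a b hab
    by_cases hS : part a = part b
    · have := hsame a b hS; omega
    · have hQadj : (oneGraph G P).Adj (part a) (part b) := by
        rw [oneGraph, SimpleGraph.fromRel_adj]
        refine ⟨hS, Or.inl ⟨a, hmem a, b, hmem b, ?_⟩⟩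
        have := SimpleGraph.dist_le (SimpleGraph.Walk.cons hab SimpleGraph.Walk.nil)
        simpa using this
      rcases hkey (part a) (part b) hQadj with h | h
      · exact cross a b hab hS h
      · rw [SimpleGraph.dist_comm]
        exact cross b a hab.symm (fun hh => hS hh.symm) h
  refine ⟨T, hTtree, fun u v => ⟨?_, ?_⟩⟩
  · obtain ⟨p, hp⟩ := hG.exists_walk_length_eq_dist u v
    have := walk_dist_transfer hTconn edgeB p
    rwa [hp] at this
  · obtain ⟨p, hp⟩ := hTconn.exists_walk_length_eq_dist u v
    have := walk_dist_transfer hG edgeA p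
    rwa [hp] at this
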